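/- Consider the delay differential inequality derived from H'(t) ≤ e^{−d_b τ}·r·H(t−τ)²/(K + H(t−τ)²) − d_h·H(t) with continuous nonnegative bounded H, and suppose d_h > r·e^{−d_b·τ}/(2√K). Then limsup_{t→∞} H(t) = 0, i.e., H(t) → 0 as t → ∞. -/

import Mathlib

open Real Filter

theorem stmt_9 (r K d_b d_h τ : ℝ)
    (hr : 0 < r) (hK : 0 < K) (hdb : 0 < d_b) (hdh : 0 < d_h) (hτ : 0 < τ)
    (hcond : d_h > r * exp (-(d_b * τ)) / (2 * Real.sqrt K))
    (H H' : ℝ → ℝ)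
    (hcont : Continuous H)
    (hnonneg : ∀ t, 0 ≤ H t)
    (hbdd : ∃ M : ℝ, ∀ t, H t ≤ M)
    (hderiv : ∀ t, 0 ≤ t → HasDerivAt H (H' t) t)
    (hineq : ∀ t, 0 ≤ t →
      H' t ≤ exp (-(d_b * τ)) * r * (H (t - τ)) ^ 2 / (K + (H (t - τ)) ^ 2) - d_h * H t) :
    Tendsto H atTop (nhds 0) := by
  obtain ⟨M, hM⟩ := hbdd
  have hsK : 0 < Real.sqrt K := Real.sqrt_pos.2 hK
  set c : ℝ := r * exp (-(d_b * τ)) / (2 * Real.sqrt K) with hc_def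
  have hc_pos : 0 < c := by positivity
  have hc_lt : c < d_h := hcond
  -- key pointwise bound
  have key : ∀ x : ℝ, 0 ≤ x → exp (-(d_b * τ)) * r * x ^ 2 / (K + x ^ 2) ≤ c * x := by
    intro x hx
    have hden : 0 < K + x ^ 2 := by positivity
    rw [div_le_iff₀ hden, hc_def, div_mul_eq_mul_div, div_mul_eq_mul_div,
      le_div_iff₀ (by positivity : (0:ℝ) < 2 * Real.sqrt K)]
    have h1 : 2 * Real.sqrt K * x ≤ K + x ^ 2 := by
      nlinarith [sq_nonneg (Real.sqrt K - x), Real.sq_sqrt hK.le]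
    have h2 : 0 ≤ exp (-(d_b * τ)) * r * x := by positivity
    nlinarith [mul_le_mul_of_nonneg_left h1 h2]
  -- boundedness facts
  have hBA : IsBoundedUnder (· ≤ ·) atTop H := isBoundedUnder_of ⟨M, hM⟩
  have hBB : IsBoundedUnder (· ≥ ·) atTop H := isBoundedUnder_of ⟨0, hnonneg⟩
  set L := limsup H atTop with hL_def
  have hL0 : 0 ≤ L := le_limsup_of_frequently_le (Frequently.of_forall hnonneg) hBA
  -- main estimate: for every ε > 0, L ≤ c * (L + ε) / d_h
  have main : ∀ ε : ℝ, 0 < ε → L ≤ c * (L + ε) / d_h := by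
    intro ε hε
    set A : ℝ := c * (L + ε) with hA_def
    have hA0 : 0 ≤ A := by positivity
    have hev : ∀ᶠ t in atTop, H t < L + ε :=
      eventually_lt_of_limsup_lt (by linarith) hBA
    obtain ⟨T₀, hT₀⟩ := eventually_atTop.1 hev
    set T : ℝ := max T₀ 0 + τ with hT_def
    have hT0 : 0 < T := by
      have : (0:ℝ) ≤ max T₀ 0 := le_max_right _ _
      linarith
    -- the delay inequality becomes linear for t ≥ T
    have hlin : ∀ t, T ≤ t → H' t ≤ A - d_h * H t := by
      intro t ht
      have ht0 : 0 ≤ t := le_of_lt (lt_of_lt_of_le hT0 ht)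
      have htτ : T₀ ≤ t - τ := by
        have : max T₀ 0 ≤ t - τ := by linarith
        exact le_trans (le_max_left _ _) this
      have hHτ : H (t - τ) < L + ε := hT₀ _ htτ
      have h1 := hineq t ht0
      have h2 := key (H (t - τ)) (hnonneg _)
      have h3 : c * H (t - τ) ≤ c * (L + ε) :=
        mul_le_mul_of_nonneg_left hHτ.le hc_pos.le
      simp only [hA_def]; linarith
    -- comparison function F t = (H t - A/d_h) * exp (d_h * t) is antitone on [T, ∞)
    set F : ℝ → ℝ := fun t => (H t - A / d_h) * Real.exp (d_h * t) with hF_def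
    have hFderiv : ∀ t ∈ interior (Set.Ici T),
        HasDerivAt F ((H' t + d_h * H t - A) * Real.exp (d_h * t)) t := by
      intro t ht
      rw [interior_Ici] at ht
      have ht0 : 0 ≤ t := le_of_lt (lt_of_lt_of_le hT0 (le_of_lt ht))
      have hH := (hderiv t ht0).sub_const (A / d_h)
      have hexp : HasDerivAt (fun t => Real.exp (d_h * t)) (Real.exp (d_h * t) * d_h) t := by
        simpa using ((hasDerivAt_id t).const_mul d_h).exp
      have := hH.mul hexp
      refine this.congr_deriv ?_
      have : d_h ≠ 0 := ne_of_gt hdh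
      have hd : A / d_h * d_h = A := div_mul_cancel₀ A this
      linear_combination (-Real.exp (d_h * t)) * hd
    have hFanti : AntitoneOn F (Set.Ici T) := by
      apply antitoneOn_of_deriv_nonpos (convex_Ici T)
      · exact ((hcont.sub continuous_const).mul
          (Real.continuous_exp.comp (continuous_const.mul continuous_id))).continuousOn
      · intro t ht
        exact ((hFderiv t ht).differentiableAt).differentiableWithinAt
      · intro t ht
        rw [(hFderiv t ht).deriv]
        have ht' : T ≤ t := le_of_lt (by rwa [interior_Ici] at ht)
        have := hlin t ht'
        have hE : 0 < Real.exp (d_h * t) := Real.exp_pos _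
        nlinarith
    -- pointwise bound for t ≥ T
    have hbound : ∀ t, T ≤ t →
        H t ≤ A / d_h + (H T - A / d_h) * Real.exp (d_h * T) * Real.exp (-(d_h * t)) := by
      intro t ht
      have hF := hFanti (Set.self_mem_Ici) (Set.mem_Ici.2 ht) ht
      have hE : 0 < Real.exp (d_h * t) := Real.exp_pos _
      have : (H t - A / d_h) * Real.exp (d_h * t) ≤ (H T - A / d_h) * Real.exp (d_h * T) := hF
      have h4 := mul_le_mul_of_nonneg_right this (Real.exp_pos (-(d_h * t))).le
      rw [mul_assoc, ← Real.exp_add] at h4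
      simp only [add_neg_cancel, Real.exp_zero, mul_one] at h4
      linarith
    -- limit of the bound
    have htend : Tendsto (fun t => A / d_h + (H T - A / d_h) * Real.exp (d_h * T) *
        Real.exp (-(d_h * t))) atTop (nhds (A / d_h)) := by
      have h5 : Tendsto (fun t : ℝ => -(d_h * t)) atTop atBot := by
        apply tendsto_neg_atBot_iff.2
        exact Tendsto.const_mul_atTop hdh tendsto_id
      have h6 : Tendsto (fun t : ℝ => Real.exp (-(d_h * t))) atTop (nhds 0) :=
        Real.tendsto_exp_atBot.comp h5
      have := h6.const_mul ((H T - A / d_h) * Real.exp (d_h * T))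
      simpa using (tendsto_const_nhds.add this)
    have hls : L ≤ A / d_h := by
      have h7 : H ≤ᶠ[atTop] fun t => A / d_h + (H T - A / d_h) * Real.exp (d_h * T) *
          Real.exp (-(d_h * t)) := by
        filter_upwards [eventually_ge_atTop T] with t ht using hbound t ht
      calc L ≤ limsup (fun t => A / d_h + (H T - A / d_h) * Real.exp (d_h * T) *
          Real.exp (-(d_h * t))) atTop := limsup_le_limsup h7 hBB.isCoboundedUnder_le
            htend.isBoundedUnder_le
        _ = A / d_h := htend.limsup_eq
    exact hls
  -- conclude L = 0
  have hL_le : L * d_h ≤ c * L := by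
    apply le_of_forall_pos_le_add
    intro ε hε
    have h := main (ε / c) (by positivity)
    rw [le_div_iff₀ hdh] at h
    have hcne : c ≠ 0 := ne_of_gt hc_pos
    calc L * d_h ≤ c * (L + ε / c) := h
      _ = c * L + ε := by field_simp
  have hLsup : L = 0 := by nlinarith
  have hLinf : liminf H atTop = 0 := by
    have h8 : 0 ≤ liminf H atTop :=
      le_liminf_of_le hBA.isCoboundedUnder_ge (Eventually.of_forall hnonneg)
    have h9 : liminf H atTop ≤ L := liminf_le_limsup hBA hBB
    linarith
  exact tendsto_of_liminf_eq_limsup hLinf hLsup hBA hBB
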